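/- (Jacobi's theorem) Let A be an n×n real matrix with classical adjoint A* (the adjugate, whose (i,j) entry is the cofactor of a_{ji}). Let σ be a permutation pairing {1,...,n} as (i_1,...,i_n) ↦ (j_1,...,j_n), let 1 ≤ p ≤ n, I = {i_1,...,i_p}, J = {j_1,...,j_p}, I' = {i_{p+1},...,i_n}, J' = {j_{p+1},...,j_n}. Then det(A*_{I×J}) = sgn(σ) · det(A_{J'×I'}) · det(A)^{p-1}. -/

import Mathlib

open Matrix Equiv

private lemma jacobi_mul {R : Type*} [CommRing R] {n p : ℕ} (hp1 : 1 ≤ p) (hpn : p ≤ n)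
    (A : Matrix (Fin n) (Fin n) R) (i j : Equiv.Perm (Fin n)) :
    A.det * ((A.adjugate).submatrix (fun r : Fin p => i (Fin.castLE hpn r))
        (fun r : Fin p => j (Fin.castLE hpn r))).det =
      A.det * (((Equiv.Perm.sign (j * i⁻¹) : ℤ) : R) *
        (A.submatrix (fun r : Fin (n - p) => j ⟨p + r.1, by have := r.2; exact Nat.lt_of_sub_pos (by omega)⟩)
          (fun r : Fin (n - p) => i ⟨p + r.1, by have := r.2; exact Nat.lt_of_sub_pos (by omega)⟩)).det *
        A.det ^ (p - 1)) := by
  have h : p + (n - p) = n := Nat.add_sub_cancel' hpn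
  set e : Fin p ⊕ Fin (n - p) ≃ Fin n := finSumFinEquiv.trans (finCongr h) with he
  set ie : Fin p ⊕ Fin (n - p) ≃ Fin n := e.trans i with hie
  set je : Fin p ⊕ Fin (n - p) ≃ Fin n := e.trans j with hje
  set C := (A.adjugate).submatrix ⇑ie ⇑je with hC
  set A' := A.submatrix ⇑je ⇑ie with hA'
  have hAC : A' * C = A.det • 1 := by
    rw [hA', hC, submatrix_mul_equiv, mul_adjugate]
    ext r s
    simp [Matrix.one_apply, EmbeddingLike.apply_eq_iff_eq]
  -- block decomposition of the identity hAC
  have hblocks := hAC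
  rw [← fromBlocks_toBlocks C, ← fromBlocks_toBlocks A', fromBlocks_multiply,
    ← fromBlocks_one, fromBlocks_smul, fromBlocks_inj] at hblocks
  obtain ⟨h11, -, h21, -⟩ := hblocks
  rw [smul_zero] at h21
  -- the auxiliary matrix M
  set M := fromBlocks C.toBlocks₁₁ (0 : Matrix (Fin p) (Fin (n - p)) R) C.toBlocks₂₁ (1 : Matrix (Fin (n - p)) (Fin (n - p)) R) with hM
  have hprod : A' * M = fromBlocks (A.det • 1) A'.toBlocks₁₂ 0 A'.toBlocks₂₂ := by
    conv_lhs => rw [← fromBlocks_toBlocks A', hM, fromBlocks_multiply]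
    rw [h11, h21]
    simp
  have hdetprod : A'.det * M.det = A.det ^ p * A'.toBlocks₂₂.det := by
    rw [← det_mul, hprod, det_fromBlocks_zero₂₁]
    congr 1
    rw [smul_one_eq_diagonal, det_diagonal]
    simp
  have hdetM : M.det = ((A.adjugate).submatrix (fun r : Fin p => i (Fin.castLE hpn r))
      (fun r : Fin p => j (Fin.castLE hpn r))).det := by
    rw [hM, det_fromBlocks_zero₁₂, det_one, mul_one]
    have : C.toBlocks₁₁ = (A.adjugate).submatrix (fun r : Fin p => i (Fin.castLE hpn r))
        (fun r : Fin p => j (Fin.castLE hpn r)) := by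
      ext r s
      simp only [toBlocks₁₁, hC, of_apply, submatrix_apply, hie, hje, he]
      congr 1 <;> · apply congrArg; ext
                    simp [finCongr_apply]
    rw [this]
  have hdetA' : A'.det = ((Perm.sign j : ℤ) : R) * ((Perm.sign i : ℤ) : R) * A.det := by
    have : A' = ((A.submatrix id ⇑i).submatrix ⇑j id).submatrix ⇑e ⇑e := by
      rw [hA']; simp [submatrix_submatrix, hje, hie, he, Function.comp_def]
    rw [this, det_submatrix_equiv_self, det_permute, det_permute']
    push_cast
    ring
  have hblock22 : A'.toBlocks₂₂ =
      A.submatrix (fun r : Fin (n - p) => j ⟨p + r.1, by have := r.2; exact Nat.lt_of_sub_pos (by omega)⟩)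
        (fun r : Fin (n - p) => i ⟨p + r.1, by have := r.2; exact Nat.lt_of_sub_pos (by omega)⟩) := by
    ext r s
    simp only [toBlocks₂₂, hA', of_apply, submatrix_apply, hie, hje, he]
    congr 1 <;> · apply congrArg; ext
                  simp [finCongr_apply]
  -- sign bookkeeping
  have hsign : ((Perm.sign (j * i⁻¹) : ℤ) : R) * (((Perm.sign j : ℤ) : R) *
      ((Perm.sign i : ℤ) : R)) = 1 := by
    have : (Perm.sign (j * i⁻¹) * (Perm.sign j * Perm.sign i) : ℤˣ) = 1 := by
      rw [_root_.map_mul, _root_.map_inv]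
      generalize Perm.sign i = a; generalize Perm.sign j = b
      rcases Int.units_eq_one_or a with rfl | rfl <;>
        rcases Int.units_eq_one_or b with rfl | rfl <;> decide
    calc ((Perm.sign (j * i⁻¹) : ℤ) : R) * (((Perm.sign j : ℤ) : R) * ((Perm.sign i : ℤ) : R))
        = (((Perm.sign (j * i⁻¹) * (Perm.sign j * Perm.sign i) : ℤˣ) : ℤ) : R) := by push_cast; ring
      _ = 1 := by rw [this]; simp
  -- assemble
  have key : ((Perm.sign j : ℤ) : R) * ((Perm.sign i : ℤ) : R) * A.det *
      ((A.adjugate).submatrix (fun r : Fin p => i (Fin.castLE hpn r))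
        (fun r : Fin p => j (Fin.castLE hpn r))).det =
      A.det ^ p * (A.submatrix (fun r : Fin (n - p) => j ⟨p + r.1, by have := r.2; exact Nat.lt_of_sub_pos (by omega)⟩)
          (fun r : Fin (n - p) => i ⟨p + r.1, by have := r.2; exact Nat.lt_of_sub_pos (by omega)⟩)).det := by
    rw [← hdetM, ← hblock22, ← hdetA']
    exact hdetprod
  have hpow : A.det * A.det ^ (p - 1) = A.det ^ p := by
    rw [← pow_succ']
    congr 1
    omega
  calc A.det * ((A.adjugate).submatrix (fun r : Fin p => i (Fin.castLE hpn r))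
        (fun r : Fin p => j (Fin.castLE hpn r))).det
      = ((Perm.sign (j * i⁻¹) : ℤ) : R) * (((Perm.sign j : ℤ) : R) * ((Perm.sign i : ℤ) : R)) *
        (A.det * ((A.adjugate).submatrix (fun r : Fin p => i (Fin.castLE hpn r))
        (fun r : Fin p => j (Fin.castLE hpn r))).det) := by rw [hsign, one_mul]
    _ = ((Perm.sign (j * i⁻¹) : ℤ) : R) * (((Perm.sign j : ℤ) : R) * ((Perm.sign i : ℤ) : R) *
        A.det * ((A.adjugate).submatrix (fun r : Fin p => i (Fin.castLE hpn r))
        (fun r : Fin p => j (Fin.castLE hpn r))).det) := by ring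
    _ = ((Perm.sign (j * i⁻¹) : ℤ) : R) * (A.det ^ p *
        (A.submatrix (fun r : Fin (n - p) => j ⟨p + r.1, by have := r.2; exact Nat.lt_of_sub_pos (by omega)⟩)
          (fun r : Fin (n - p) => i ⟨p + r.1, by have := r.2; exact Nat.lt_of_sub_pos (by omega)⟩)).det) := by rw [key]
    _ = A.det * (((Perm.sign (j * i⁻¹) : ℤ) : R) *
        (A.submatrix (fun r : Fin (n - p) => j ⟨p + r.1, by have := r.2; exact Nat.lt_of_sub_pos (by omega)⟩)
          (fun r : Fin (n - p) => i ⟨p + r.1, by have := r.2; exact Nat.lt_of_sub_pos (by omega)⟩)).det *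
        A.det ^ (p - 1)) := by rw [← hpow]; ring

private lemma jacobi_domain {R : Type*} [CommRing R] [IsDomain R] {n p : ℕ} (hp1 : 1 ≤ p)
    (hpn : p ≤ n) (A : Matrix (Fin n) (Fin n) R) (i j : Equiv.Perm (Fin n)) (hA : A.det ≠ 0) :
    ((A.adjugate).submatrix (fun r : Fin p => i (Fin.castLE hpn r))
        (fun r : Fin p => j (Fin.castLE hpn r))).det =
      ((Equiv.Perm.sign (j * i⁻¹) : ℤ) : R) *
        (A.submatrix (fun r : Fin (n - p) => j ⟨p + r.1, by have := r.2; exact Nat.lt_of_sub_pos (by omega)⟩)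
          (fun r : Fin (n - p) => i ⟨p + r.1, by have := r.2; exact Nat.lt_of_sub_pos (by omega)⟩)).det *
        A.det ^ (p - 1) :=
  mul_left_cancel₀ hA (jacobi_mul hp1 hpn A i j)

theorem stmt6 {n p : ℕ} (hp1 : 1 ≤ p) (hpn : p ≤ n) (A : Matrix (Fin n) (Fin n) ℝ)
    (i j : Equiv.Perm (Fin n)) :
    ((A.adjugate).submatrix (fun r : Fin p => i (Fin.castLE hpn r))
        (fun r : Fin p => j (Fin.castLE hpn r))).det =
      ((Equiv.Perm.sign (j * i⁻¹) : ℤ) : ℝ) *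
        (A.submatrix (fun r : Fin (n - p) => j ⟨p + r.1, by have := r.2; omega⟩)
          (fun r : Fin (n - p) => i ⟨p + r.1, by have := r.2; omega⟩)).det *
        A.det ^ (p - 1) := by
  classical
  set B : Matrix (Fin n) (Fin n) (Polynomial ℝ) := charmatrix (-A) with hB
  have hdB : B.det ≠ 0 := (charpoly_monic (-A)).ne_zero
  have key := jacobi_domain hp1 hpn B i j hdB
  set f : Polynomial ℝ →+* ℝ := Polynomial.evalRingHom 0 with hf
  have hmapB : B.map ⇑f = A := by
    ext r s
    by_cases hrs : r = s
    · subst hrs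
      simp [hB, charmatrix_apply_eq, hf]
    · simp [hB, charmatrix_apply_ne _ _ _ hrs, hf]
  have hadj : (B.adjugate).map ⇑f = A.adjugate := by
    have h1 := f.map_adjugate B
    simp only [RingHom.mapMatrix_apply] at h1
    rw [h1, hmapB]
  have e1 : f (((B.adjugate).submatrix (fun r : Fin p => i (Fin.castLE hpn r))
      (fun r : Fin p => j (Fin.castLE hpn r))).det) =
      ((A.adjugate).submatrix (fun r : Fin p => i (Fin.castLE hpn r))
      (fun r : Fin p => j (Fin.castLE hpn r))).det := by
    rw [RingHom.map_det, RingHom.mapMatrix_apply, ← Matrix.submatrix_map, hadj]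
  have e2 : f ((B.submatrix (fun r : Fin (n - p) => j ⟨p + r.1, by have := r.2; omega⟩)
      (fun r : Fin (n - p) => i ⟨p + r.1, by have := r.2; omega⟩)).det) =
      ((A.submatrix (fun r : Fin (n - p) => j ⟨p + r.1, by have := r.2; omega⟩)
      (fun r : Fin (n - p) => i ⟨p + r.1, by have := r.2; omega⟩)).det) := by
    rw [RingHom.map_det, RingHom.mapMatrix_apply, ← Matrix.submatrix_map, hmapB]
  have e3 : f B.det = A.det := by
    rw [RingHom.map_det, RingHom.mapMatrix_apply, hmapB]
  calc ((A.adjugate).submatrix (fun r : Fin p => i (Fin.castLE hpn r))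
        (fun r : Fin p => j (Fin.castLE hpn r))).det
      = f (((B.adjugate).submatrix (fun r : Fin p => i (Fin.castLE hpn r))
        (fun r : Fin p => j (Fin.castLE hpn r))).det) := e1.symm
    _ = f (((Equiv.Perm.sign (j * i⁻¹) : ℤ) : Polynomial ℝ) *
        (B.submatrix (fun r : Fin (n - p) => j ⟨p + r.1, by have := r.2; omega⟩)
          (fun r : Fin (n - p) => i ⟨p + r.1, by have := r.2; omega⟩)).det *
        B.det ^ (p - 1)) := by rw [key]
    _ = ((Equiv.Perm.sign (j * i⁻¹) : ℤ) : ℝ) *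
        (A.submatrix (fun r : Fin (n - p) => j ⟨p + r.1, by have := r.2; omega⟩)
          (fun r : Fin (n - p) => i ⟨p + r.1, by have := r.2; omega⟩)).det *
        A.det ^ (p - 1) := by
      rw [_root_.map_mul, _root_.map_mul, _root_.map_pow, e2, e3, map_intCast]
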